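/- Consider the directed network with vertex set {A, B, C, D, E, F}, all vertices boundary vertices, and edges, each of capacity 1: A → E, E → C, C → D, D → A, D → C, C → F, F → B, B → D, A → F, F → A. This network is balanced, and its cycle-flow entropies satisfy S({B,C}) = 3, S({A,B,C,D}) = 3, S({A,B,C}) = 3, and S({B,C,D}) = 2; in particular strong subadditivity fails: S({A,B,C}) + S({B,C,D}) < S({B,C}) + S({A,B,C,D}). Hence this balanced network does not satisfy the nesting property. -/

import Mathlib

open scoped Classical

/-- An edge cycle: a nonempty cyclically ordered sequence of distinct directed
edges (each a source-target pair) with the target of each edge equal to the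
source of the next (cyclically). -/
structure EdgeCycle (V : Type*) where
  n : ℕ
  npos : 0 < n
  edge : Fin n → V × V
  inj : Function.Injective edge
  chain : ∀ i : Fin n, (edge i).2 = (edge ⟨(i.val + 1) % n, Nat.mod_lt _ npos⟩).1

/-- Membership of a directed edge in an edge cycle. -/
def EdgeCycle.Mem {V : Type*} (C : EdgeCycle V) (e : V × V) : Prop :=
  ∃ i, C.edge i = e

/-- The cycle visits a vertex of `S`: some edge of the cycle has its target in `S`. -/
def EdgeCycle.Visits {V : Type*} (C : EdgeCycle V) (S : Finset V) : Prop :=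
  ∃ i, (C.edge i).2 ∈ S

/-- A simple cycle flow: an edge cycle together with a nonnegative flux. -/
structure CycleFlow (V : Type*) where
  cyc : EdgeCycle V
  flux : ℝ
  flux_nonneg : 0 ≤ flux

/-- The total load that a finite family of simple cycle flows places on the
directed edge `(u, v)`. -/
noncomputable def edgeLoad {V : Type*} (F : List (CycleFlow V)) (u v : V) : ℝ :=
  (F.map (fun C => if C.cyc.Mem (u, v) then C.flux else 0)).sum

/-- A finite family of simple cycle flows is a multi-cycle flow on the network
with capacity function `c` if on every edge the total load is at most the capacity. -/
def Feasible {V : Type*} (c : V → V → ℝ) (F : List (CycleFlow V)) : Prop :=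
  ∀ u v, edgeLoad F u v ≤ c u v

/-- The flux of a multi-cycle flow between two (disjoint) vertex sets `I` and `J`:
the sum of the fluxes of those simple cycle flows visiting both a vertex of `I`
and a vertex of `J`. -/
noncomputable def mflux {V : Type*} (F : List (CycleFlow V)) (I J : Finset V) : ℝ :=
  (F.map (fun C => if C.cyc.Visits I ∧ C.cyc.Visits J then C.flux else 0)).sum

/-- The cycle-flow entropy of a subset `I` of the boundary vertices `bdry`:
the maximal flux between `I` and its boundary complement over all
multi-cycle flows. -/
noncomputable def entropy {V : Type*} (c : V → V → ℝ) (bdry I : Finset V) : ℝ :=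
  sSup { x | ∃ F : List (CycleFlow V), Feasible c F ∧ mflux F I (bdry \ I) = x }

/-- A network is balanced if at every vertex the total capacity of ingoing edges
equals the total capacity of outgoing edges. -/
def BalancedNet {V : Type*} [Fintype V] (c : V → V → ℝ) : Prop :=
  ∀ v : V, (∑ u, c u v) = ∑ u, c v u

/-- The residual capacity function of a network `c` with respect to a
multi-cycle flow `F`. -/
noncomputable def resid {V : Type*} (c : V → V → ℝ) (F : List (CycleFlow V)) : V → V → ℝ :=
  fun u v => c u v - edgeLoad F u v

/-- `F'` is a multi-cycle subflow of `F`: same edge cycles, smaller fluxes. -/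
def Subflow {V : Type*} (F' F : List (CycleFlow V)) : Prop :=
  List.Forall₂ (fun C' C => C'.cyc = C.cyc ∧ C'.flux ≤ C.flux) F' F

/-- The nesting property: for every pair of disjoint boundary subsets `I`, `J`
there is a single multi-cycle flow simultaneously maximizing the flux through
`I` and through `I ∪ J`. -/
def Nesting {V : Type*} (c : V → V → ℝ) (bdry : Finset V) : Prop :=
  ∀ I J : Finset V, I ⊆ bdry → J ⊆ bdry → Disjoint I J →
    ∃ F : List (CycleFlow V), Feasible c F ∧
      mflux F I (bdry \ I) = entropy c bdry I ∧
      mflux F (I ∪ J) (bdry \ (I ∪ J)) = entropy c bdry (I ∪ J)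

/-- The balanced network of Figure 4: vertices `A = 0, B = 1, C = 2, D = 3,
E = 4, F = 5`, all boundary vertices, and edges of capacity `1`:
`A → E, E → C, C → D, D → A, D → C, C → F, F → B, B → D, A → F, F → A`. -/
noncomputable def cap15 : Fin 6 → Fin 6 → ℝ := fun u v =>
  if (u, v) ∈ ([(0, 4), (4, 2), (2, 3), (3, 0), (3, 2), (2, 5), (5, 1), (1, 3),
      (0, 5), (5, 0)] : List (Fin 6 × Fin 6)) then 1 else 0

namespace Net15

lemma cyclic_invariant {n : ℕ} (hn : 0 < n) (p : Fin n → Prop)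
    (h : ∀ i : Fin n, p i → p ⟨(i.val + 1) % n, Nat.mod_lt _ hn⟩)
    {i : Fin n} (hi : p i) : ∀ j : Fin n, p j := by
  have key : ∀ m : ℕ, p ⟨(i.val + m) % n, Nat.mod_lt _ hn⟩ := by
    intro m
    induction m with
    | zero => simpa [Nat.mod_eq_of_lt i.isLt] using hi
    | succ m ih =>
      have h2 := h _ ih
      have : ((i.val + m) % n + 1) % n = (i.val + (m + 1)) % n := by
        rw [Nat.mod_add_mod, Nat.add_assoc]
      simpa [this] using h2
  intro j
  have hj : (i.val + (n - i.val + j.val)) % n = j.val := by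
    have h1 : i.val + (n - i.val + j.val) = n + j.val := by
      have := i.isLt; omega
    rw [h1, Nat.add_mod_left, Nat.mod_eq_of_lt j.isLt]
  have := key (n - i.val + j.val)
  have he : (⟨(i.val + (n - i.val + j.val)) % n, Nat.mod_lt _ hn⟩ : Fin n) = j :=
    Fin.ext hj
  rwa [he] at this

lemma cyclic_flip {n : ℕ} (hn : 0 < n) (p : Fin n → Prop)
    (h1 : ∃ i, p i) (h2 : ∃ j, ¬ p j) :
    ∃ i : Fin n, p i ∧ ¬ p ⟨(i.val + 1) % n, Nat.mod_lt _ hn⟩ := by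
  by_contra hc
  obtain ⟨i, hi⟩ := h1
  obtain ⟨j, hj⟩ := h2
  exact hj (cyclic_invariant hn p
    (fun k hk => by_contra fun hns => hc ⟨k, hk, hns⟩) hi j)


lemma no_mono_cycle {V : Type*} (C : EdgeCycle V) (r : V → ℕ)
    (h : ∀ i, r (C.edge i).1 < r (C.edge i).2) : False := by
  obtain ⟨i0, -, hmax⟩ := Finset.exists_max_image Finset.univ
    (fun i => r (C.edge i).2) ⟨⟨0, C.npos⟩, Finset.mem_univ _⟩
  set j : Fin C.n := ⟨(i0.val + 1) % C.n, Nat.mod_lt _ C.npos⟩ with hj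
  have h1 : r (C.edge i0).2 = r (C.edge j).1 := by rw [C.chain i0]
  have h2 := h j
  have h3 := hmax j (Finset.mem_univ _)
  omega

lemma exists_cut_edge {V : Type*} (C : EdgeCycle V) (I : Finset V)
    (h1 : ∃ i, (C.edge i).2 ∈ I) (h2 : ∃ i, (C.edge i).2 ∉ I) :
    ∃ i, (C.edge i).1 ∈ I ∧ (C.edge i).2 ∉ I := by
  obtain ⟨i, hi, hsucc⟩ := cyclic_flip C.npos (fun i => (C.edge i).2 ∈ I) h1 h2
  exact ⟨⟨(i.val + 1) % C.n, Nat.mod_lt _ C.npos⟩, by rw [← C.chain i]; exact hi, hsucc⟩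

lemma sum_map_add {α : Type*} (Y : List α) (f g : α → ℝ) :
    (Y.map (fun e => f e + g e)).sum = (Y.map f).sum + (Y.map g).sum := by
  induction Y with
  | nil => simp
  | cons a t ih => simp [ih]; ring

lemma edgeLoad_cons {V : Type*} (C : CycleFlow V) (F : List (CycleFlow V)) (u v : V) :
    edgeLoad (C :: F) u v = (if C.cyc.Mem (u, v) then C.flux else 0) + edgeLoad F u v := by
  simp [edgeLoad]

lemma mflux_cons {V : Type*} (C : CycleFlow V) (F : List (CycleFlow V)) (I J : Finset V) :
    mflux (C :: F) I J = (if C.cyc.Visits I ∧ C.cyc.Visits J then C.flux else 0) + mflux F I J := by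
  simp [mflux]

lemma mflux_le_loadsum {V : Type*} (F : List (CycleFlow V)) (I J : Finset V)
    (Y : List (V × V))
    (h : ∀ C : EdgeCycle V, C.Visits I → C.Visits J → ∃ e ∈ Y, C.Mem e) :
    mflux F I J ≤ (Y.map (fun e => edgeLoad F e.1 e.2)).sum := by
  induction F with
  | nil =>
    simp only [mflux, List.map_nil, List.sum_nil, edgeLoad]
    simp
  | cons C F ih =>
    rw [mflux_cons]
    have hY : (Y.map (fun e => edgeLoad (C :: F) e.1 e.2)).sum =
        (Y.map (fun e => if C.cyc.Mem (e.1, e.2) then C.flux else 0)).sum +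
        (Y.map (fun e => edgeLoad F e.1 e.2)).sum := by
      rw [← sum_map_add]
      rfl
    rw [hY]
    have hhead : (if C.cyc.Visits I ∧ C.cyc.Visits J then C.flux else 0) ≤
        (Y.map (fun e => if C.cyc.Mem (e.1, e.2) then C.flux else 0)).sum := by
      have hnn : ∀ x ∈ Y.map (fun e => if C.cyc.Mem (e.1, e.2) then C.flux else 0), (0:ℝ) ≤ x := by
        intro x hx
        obtain ⟨e, -, rfl⟩ := List.mem_map.mp hx
        split
        · exact C.flux_nonneg
        · exact le_refl 0
      by_cases hvis : C.cyc.Visits I ∧ C.cyc.Visits J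
      · rw [if_pos hvis]
        obtain ⟨e, heY, hmem⟩ := h C.cyc hvis.1 hvis.2
        have hin : (if C.cyc.Mem (e.1, e.2) then C.flux else 0) ∈
            Y.map (fun e => if C.cyc.Mem (e.1, e.2) then C.flux else 0) :=
          List.mem_map.mpr ⟨e, heY, rfl⟩
        have hval : (if C.cyc.Mem (e.1, e.2) then C.flux else 0) = C.flux := if_pos hmem
        calc C.flux = _ := hval.symm
          _ ≤ _ := List.single_le_sum hnn _ hin
      · rw [if_neg hvis]
        exact List.sum_nonneg hnn
    linarith [ih]

def edges15 : List (Fin 6 × Fin 6) :=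
  [(0, 4), (4, 2), (2, 3), (3, 0), (3, 2), (2, 5), (5, 1), (1, 3), (0, 5), (5, 0)]

lemma cap15_def (u v : Fin 6) : cap15 u v = if (u, v) ∈ edges15 then 1 else 0 := rfl

lemma cap15_nonneg (u v : Fin 6) : 0 ≤ cap15 u v := by
  rw [cap15_def]; split <;> norm_num

def mkCyc (n : ℕ) (hn : 0 < n) (e : Fin n → Fin 6 × Fin 6)
    (hinj : Function.Injective e)
    (hch : ∀ i : Fin n, (e i).2 = (e ⟨(i.val + 1) % n, Nat.mod_lt _ hn⟩).1) :
    EdgeCycle (Fin 6) := ⟨n, hn, e, hinj, hch⟩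

def cyc1 : EdgeCycle (Fin 6) := mkCyc 4 (by norm_num) ![(0,4),(4,2),(2,3),(3,0)] (by decide) (by decide)
def cyc2 : EdgeCycle (Fin 6) := mkCyc 4 (by norm_num) ![(3,2),(2,5),(5,1),(1,3)] (by decide) (by decide)
def cyc3 : EdgeCycle (Fin 6) := mkCyc 2 (by norm_num) ![(0,5),(5,0)] (by decide) (by decide)
def cyc1' : EdgeCycle (Fin 6) := mkCyc 4 (by norm_num) ![(0,4),(4,2),(2,5),(5,0)] (by decide) (by decide)
def cyc2' : EdgeCycle (Fin 6) := mkCyc 2 (by norm_num) ![(2,3),(3,2)] (by decide) (by decide)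
def cyc3' : EdgeCycle (Fin 6) := mkCyc 4 (by norm_num) ![(0,5),(5,1),(1,3),(3,0)] (by decide) (by decide)

noncomputable def F0 : List (CycleFlow (Fin 6)) :=
  [⟨cyc1, 1, zero_le_one⟩, ⟨cyc2, 1, zero_le_one⟩, ⟨cyc3, 1, zero_le_one⟩]
noncomputable def F1 : List (CycleFlow (Fin 6)) :=
  [⟨cyc1', 1, zero_le_one⟩, ⟨cyc2', 1, zero_le_one⟩, ⟨cyc3', 1, zero_le_one⟩]

instance {V : Type*} [DecidableEq V] (C : EdgeCycle V) (e : V × V) : Decidable (C.Mem e) :=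
  decidable_of_iff (∃ i, C.edge i = e) Iff.rfl

instance {V : Type*} [DecidableEq V] (C : EdgeCycle V) (S : Finset V) : Decidable (C.Visits S) :=
  decidable_of_iff (∃ i, (C.edge i).2 ∈ S) Iff.rfl

lemma feasible3 (c1 c2 c3 : EdgeCycle (Fin 6))
    (hd : ∀ u v : Fin 6, ¬(c1.Mem (u,v) ∧ c2.Mem (u,v)) ∧ ¬(c1.Mem (u,v) ∧ c3.Mem (u,v)) ∧
      ¬(c2.Mem (u,v) ∧ c3.Mem (u,v)) ∧
      ((c1.Mem (u,v) ∨ c2.Mem (u,v) ∨ c3.Mem (u,v)) → (u, v) ∈ edges15)) :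
    Feasible cap15 [⟨c1, 1, zero_le_one⟩, ⟨c2, 1, zero_le_one⟩, ⟨c3, 1, zero_le_one⟩] := by
  intro u v
  obtain ⟨h12, h13, h23, hmem⟩ := hd u v
  simp only [edgeLoad, List.map_cons, List.map_nil, List.sum_cons, List.sum_nil]
  by_cases m1 : c1.Mem (u, v) <;> by_cases m2 : c2.Mem (u, v) <;> by_cases m3 : c3.Mem (u, v)
  · exact absurd ⟨m1, m2⟩ h12
  · exact absurd ⟨m1, m2⟩ h12
  · exact absurd ⟨m1, m3⟩ h13
  · have hc : cap15 u v = 1 := by rw [cap15_def]; exact if_pos (hmem (by tauto))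
    rw [hc, if_pos m1, if_neg m2, if_neg m3]; norm_num
  · exact absurd ⟨m2, m3⟩ h23
  · have hc : cap15 u v = 1 := by rw [cap15_def]; exact if_pos (hmem (by tauto))
    rw [hc, if_neg m1, if_pos m2, if_neg m3]; norm_num
  · have hc : cap15 u v = 1 := by rw [cap15_def]; exact if_pos (hmem (by tauto))
    rw [hc, if_neg m1, if_neg m2, if_pos m3]; norm_num
  · rw [if_neg m1, if_neg m2, if_neg m3]; simpa using cap15_nonneg u v

lemma feasF0 : Feasible cap15 F0 := feasible3 cyc1 cyc2 cyc3 (by decide)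
lemma feasF1 : Feasible cap15 F1 := feasible3 cyc1' cyc2' cyc3' (by decide)

def Ybc : List (Fin 6 × Fin 6) := [(1, 0), (1, 3), (1, 4), (1, 5), (2, 0), (2, 3), (2, 4), (2, 5)]

lemma Ybc_sum : (Ybc.map (fun e => cap15 e.1 e.2)).sum = 3 := by
  simp only [Ybc, List.map_cons, List.map_nil, List.sum_cons, List.sum_nil]
  rw [show cap15 1 0 = 0 from if_neg (by decide), show cap15 1 3 = 1 from if_pos (by decide), show cap15 1 4 = 0 from if_neg (by decide), show cap15 1 5 = 0 from if_neg (by decide), show cap15 2 0 = 0 from if_neg (by decide), show cap15 2 3 = 1 from if_pos (by decide), show cap15 2 4 = 0 from if_neg (by decide), show cap15 2 5 = 1 from if_pos (by decide)]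
  norm_num

def Yabcd : List (Fin 6 × Fin 6) := [(0, 4), (0, 5), (1, 4), (1, 5), (2, 4), (2, 5), (3, 4), (3, 5)]

lemma Yabcd_sum : (Yabcd.map (fun e => cap15 e.1 e.2)).sum = 3 := by
  simp only [Yabcd, List.map_cons, List.map_nil, List.sum_cons, List.sum_nil]
  rw [show cap15 0 4 = 1 from if_pos (by decide), show cap15 0 5 = 1 from if_pos (by decide), show cap15 1 4 = 0 from if_neg (by decide), show cap15 1 5 = 0 from if_neg (by decide), show cap15 2 4 = 0 from if_neg (by decide), show cap15 2 5 = 1 from if_pos (by decide), show cap15 3 4 = 0 from if_neg (by decide), show cap15 3 5 = 0 from if_neg (by decide)]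
  norm_num

def Ybcd : List (Fin 6 × Fin 6) := [(1, 0), (1, 4), (1, 5), (2, 0), (2, 4), (2, 5), (3, 0), (3, 4), (3, 5)]

lemma Ybcd_sum : (Ybcd.map (fun e => cap15 e.1 e.2)).sum = 2 := by
  simp only [Ybcd, List.map_cons, List.map_nil, List.sum_cons, List.sum_nil]
  rw [show cap15 1 0 = 0 from if_neg (by decide), show cap15 1 4 = 0 from if_neg (by decide), show cap15 1 5 = 0 from if_neg (by decide), show cap15 2 0 = 0 from if_neg (by decide), show cap15 2 4 = 0 from if_neg (by decide), show cap15 2 5 = 1 from if_pos (by decide), show cap15 3 0 = 1 from if_pos (by decide), show cap15 3 4 = 0 from if_neg (by decide), show cap15 3 5 = 0 from if_neg (by decide)]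
  norm_num

def Yabc : List (Fin 6 × Fin 6) := [(0, 0), (0, 1), (0, 3), (0, 5), (1, 1), (1, 5), (2, 0), (2, 1), (2, 2), (2, 3), (2, 4), (2, 5), (3, 1), (3, 3), (3, 5), (4, 0), (4, 1), (4, 3), (4, 4), (4, 5), (5, 5)]

lemma Yabc_sum : (Yabc.map (fun e => cap15 e.1 e.2)).sum = 3 := by
  simp only [Yabc, List.map_cons, List.map_nil, List.sum_cons, List.sum_nil]
  rw [show cap15 0 0 = 0 from if_neg (by decide), show cap15 0 1 = 0 from if_neg (by decide), show cap15 0 3 = 0 from if_neg (by decide), show cap15 0 5 = 1 from if_pos (by decide), show cap15 1 1 = 0 from if_neg (by decide), show cap15 1 5 = 0 from if_neg (by decide), show cap15 2 0 = 0 from if_neg (by decide), show cap15 2 1 = 0 from if_neg (by decide), show cap15 2 2 = 0 from if_neg (by decide), show cap15 2 3 = 1 from if_pos (by decide), show cap15 2 4 = 0 from if_neg (by decide), show cap15 2 5 = 1 from if_pos (by decide), show cap15 3 1 = 0 from if_neg (by decide), show cap15 3 3 = 0 from if_neg (by decide), show cap15 3 5 = 0 from if_neg (by decide), show cap15 4 0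 = 0 from if_neg (by decide), show cap15 4 1 = 0 from if_neg (by decide), show cap15 4 3 = 0 from if_neg (by decide), show cap15 4 4 = 0 from if_neg (by decide), show cap15 4 5 = 0 from if_neg (by decide), show cap15 5 5 = 0 from if_neg (by decide)]
  norm_num

lemma cut_bound (F : List (CycleFlow (Fin 6))) (hF : Feasible cap15 F)
    (I J : Finset (Fin 6)) (Y : List (Fin 6 × Fin 6))
    (hIJ : ∀ x ∈ J, x ∉ I) (hY : ∀ u v : Fin 6, u ∈ I → v ∉ I → (u, v) ∈ Y) :
    mflux F I J ≤ (Y.map (fun e => cap15 e.1 e.2)).sum := by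
  refine le_trans (mflux_le_loadsum F I J Y ?_) (List.sum_le_sum ?_)
  · intro C hI hJ
    obtain ⟨i, h1, h2⟩ := exists_cut_edge C I hI
      (by obtain ⟨i, hi⟩ := hJ; exact ⟨i, hIJ _ hi⟩)
    exact ⟨C.edge i, hY _ _ h1 h2, ⟨i, rfl⟩⟩
  · intro e _
    exact hF e.1 e.2

lemma rank_bound (F : List (CycleFlow (Fin 6))) (hF : Feasible cap15 F)
    (I J : Finset (Fin 6)) (Y : List (Fin 6 × Fin 6)) (r : Fin 6 → ℕ)
    (hY : ∀ u v : Fin 6, (u, v) ∈ Y ∨ r u < r v) :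
    mflux F I J ≤ (Y.map (fun e => cap15 e.1 e.2)).sum := by
  refine le_trans (mflux_le_loadsum F I J Y ?_) (List.sum_le_sum ?_)
  · intro C _ _
    by_contra hc
    push_neg at hc
    apply no_mono_cycle C r
    intro i
    rcases hY (C.edge i).1 (C.edge i).2 with h | h
    · exact absurd ⟨i, rfl⟩ (hc (C.edge i) h)
    · exact h
  · intro e _
    exact hF e.1 e.2

lemma ub_BC (F : List (CycleFlow (Fin 6))) (hF : Feasible cap15 F) :
    mflux F {1, 2} (Finset.univ \ {1, 2}) ≤ 3 :=
  le_trans (cut_bound F hF _ _ Ybc (by decide) (by decide)) (le_of_eq Ybc_sum)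

lemma ub_ABCD (F : List (CycleFlow (Fin 6))) (hF : Feasible cap15 F) :
    mflux F {0, 1, 2, 3} (Finset.univ \ {0, 1, 2, 3}) ≤ 3 :=
  le_trans (cut_bound F hF _ _ Yabcd (by decide) (by decide)) (le_of_eq Yabcd_sum)

lemma ub_BCD (F : List (CycleFlow (Fin 6))) (hF : Feasible cap15 F) :
    mflux F {1, 2, 3} (Finset.univ \ {1, 2, 3}) ≤ 2 :=
  le_trans (cut_bound F hF _ _ Ybcd (by decide) (by decide)) (le_of_eq Ybcd_sum)

lemma ub_ABC (F : List (CycleFlow (Fin 6))) (hF : Feasible cap15 F) :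
    mflux F {0, 1, 2} (Finset.univ \ {0, 1, 2}) ≤ 3 :=
  le_trans (rank_bound F hF _ _ Yabc ![3, 1, 5, 2, 4, 0] (by decide)) (le_of_eq Yabc_sum)

lemma mflux3 (c1 c2 c3 : EdgeCycle (Fin 6)) (I J : Finset (Fin 6)) :
    mflux [⟨c1, 1, zero_le_one⟩, ⟨c2, 1, zero_le_one⟩, ⟨c3, 1, zero_le_one⟩] I J =
      (if c1.Visits I ∧ c1.Visits J then (1:ℝ) else 0) +
      ((if c2.Visits I ∧ c2.Visits J then (1:ℝ) else 0) +
      ((if c3.Visits I ∧ c3.Visits J then (1:ℝ) else 0) + 0)) := by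
  simp only [mflux, List.map_cons, List.map_nil, List.sum_cons, List.sum_nil]

lemma mfluxF1_BC : mflux F1 {1, 2} (Finset.univ \ {1, 2}) = 3 := by
  rw [show F1 = [⟨cyc1', 1, zero_le_one⟩, ⟨cyc2', 1, zero_le_one⟩, ⟨cyc3', 1, zero_le_one⟩] from rfl,
    mflux3, if_pos ⟨by decide, by decide⟩, if_pos ⟨by decide, by decide⟩,
    if_pos ⟨by decide, by decide⟩]
  norm_num

lemma mfluxF0_ABCD : mflux F0 {0, 1, 2, 3} (Finset.univ \ {0, 1, 2, 3}) = 3 := by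
  rw [show F0 = [⟨cyc1, 1, zero_le_one⟩, ⟨cyc2, 1, zero_le_one⟩, ⟨cyc3, 1, zero_le_one⟩] from rfl,
    mflux3, if_pos ⟨by decide, by decide⟩, if_pos ⟨by decide, by decide⟩,
    if_pos ⟨by decide, by decide⟩]
  norm_num

lemma mfluxF0_ABC : mflux F0 {0, 1, 2} (Finset.univ \ {0, 1, 2}) = 3 := by
  rw [show F0 = [⟨cyc1, 1, zero_le_one⟩, ⟨cyc2, 1, zero_le_one⟩, ⟨cyc3, 1, zero_le_one⟩] from rfl,
    mflux3, if_pos ⟨by decide, by decide⟩, if_pos ⟨by decide, by decide⟩,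
    if_pos ⟨by decide, by decide⟩]
  norm_num

lemma mfluxF0_BCD : mflux F0 {1, 2, 3} (Finset.univ \ {1, 2, 3}) = 2 := by
  rw [show F0 = [⟨cyc1, 1, zero_le_one⟩, ⟨cyc2, 1, zero_le_one⟩, ⟨cyc3, 1, zero_le_one⟩] from rfl,
    mflux3, if_pos ⟨by decide, by decide⟩, if_pos ⟨by decide, by decide⟩,
    if_neg (by decide)]
  norm_num

lemma entropy_eq (I : Finset (Fin 6)) (k : ℝ) (F : List (CycleFlow (Fin 6)))
    (hF : Feasible cap15 F) (hm : mflux F I (Finset.univ \ I) = k)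
    (hub : ∀ F' : List (CycleFlow (Fin 6)), Feasible cap15 F' →
      mflux F' I (Finset.univ \ I) ≤ k) :
    entropy cap15 Finset.univ I = k := by
  have hsd : @SDiff.sdiff _ (@Finset.instSDiff (Fin 6) (fun a b => Classical.propDecidable (a = b)))
      Finset.univ I = Finset.univ \ I := by congr!
  unfold entropy
  simp only [hsd]
  apply IsGreatest.csSup_eq
  constructor
  · exact ⟨F, hF, hm⟩
  · rintro x ⟨F', hF', rfl⟩
    exact hub F' hF'

lemma ent_BC : entropy cap15 Finset.univ ({1, 2} : Finset (Fin 6)) = 3 :=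
  entropy_eq _ _ F1 feasF1 mfluxF1_BC ub_BC
lemma ent_ABCD : entropy cap15 Finset.univ ({0, 1, 2, 3} : Finset (Fin 6)) = 3 :=
  entropy_eq _ _ F0 feasF0 mfluxF0_ABCD ub_ABCD
lemma ent_ABC : entropy cap15 Finset.univ ({0, 1, 2} : Finset (Fin 6)) = 3 :=
  entropy_eq _ _ F0 feasF0 mfluxF0_ABC ub_ABC
lemma ent_BCD : entropy cap15 Finset.univ ({1, 2, 3} : Finset (Fin 6)) = 2 :=
  entropy_eq _ _ F0 feasF0 mfluxF0_BCD ub_BCD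

lemma balanced15 : BalancedNet cap15 := by
  intro v
  fin_cases v
  · rw [Fin.sum_univ_six, Fin.sum_univ_six]
    show cap15 0 0 + cap15 1 0 + cap15 2 0 + cap15 3 0 + cap15 4 0 + cap15 5 0 = cap15 0 0 + cap15 0 1 + cap15 0 2 + cap15 0 3 + cap15 0 4 + cap15 0 5
    rw [show cap15 0 0 = 0 from if_neg (by decide), show cap15 1 0 = 0 from if_neg (by decide), show cap15 2 0 = 0 from if_neg (by decide), show cap15 3 0 = 1 from if_pos (by decide), show cap15 4 0 = 0 from if_neg (by decide), show cap15 5 0 = 1 from if_pos (by decide), show cap15 0 1 = 0 from if_neg (by decide), show cap15 0 2 = 0 from if_neg (by decide), show cap15 0 3 = 0 from if_neg (by decide), show cap15 0 4 = 1 from if_pos (by decide), show cap15 0 5 = 1 from if_pos (by decide)]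
    norm_num
  · rw [Fin.sum_univ_six, Fin.sum_univ_six]
    show cap15 0 1 + cap15 1 1 + cap15 2 1 + cap15 3 1 + cap15 4 1 + cap15 5 1 = cap15 1 0 + cap15 1 1 + cap15 1 2 + cap15 1 3 + cap15 1 4 + cap15 1 5
    rw [show cap15 0 1 = 0 from if_neg (by decide), show cap15 1 1 = 0 from if_neg (by decide), show cap15 2 1 = 0 from if_neg (by decide), show cap15 3 1 = 0 from if_neg (by decide), show cap15 4 1 = 0 from if_neg (by decide), show cap15 5 1 = 1 from if_pos (by decide), show cap15 1 0 = 0 from if_neg (by decide), show cap15 1 2 = 0 from if_neg (by decide), show cap15 1 3 = 1 from if_pos (by decide), show cap15 1 4 = 0 from if_neg (by decide), show cap15 1 5 = 0 from if_neg (by decide)]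
    norm_num
  · rw [Fin.sum_univ_six, Fin.sum_univ_six]
    show cap15 0 2 + cap15 1 2 + cap15 2 2 + cap15 3 2 + cap15 4 2 + cap15 5 2 = cap15 2 0 + cap15 2 1 + cap15 2 2 + cap15 2 3 + cap15 2 4 + cap15 2 5
    rw [show cap15 0 2 = 0 from if_neg (by decide), show cap15 1 2 = 0 from if_neg (by decide), show cap15 2 2 = 0 from if_neg (by decide), show cap15 3 2 = 1 from if_pos (by decide), show cap15 4 2 = 1 from if_pos (by decide), show cap15 5 2 = 0 from if_neg (by decide), show cap15 2 0 = 0 from if_neg (by decide), show cap15 2 1 = 0 from if_neg (by decide), show cap15 2 3 = 1 from if_pos (by decide), show cap15 2 4 = 0 from if_neg (by decide), show cap15 2 5 = 1 from if_pos (by decide)]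
    norm_num
  · rw [Fin.sum_univ_six, Fin.sum_univ_six]
    show cap15 0 3 + cap15 1 3 + cap15 2 3 + cap15 3 3 + cap15 4 3 + cap15 5 3 = cap15 3 0 + cap15 3 1 + cap15 3 2 + cap15 3 3 + cap15 3 4 + cap15 3 5
    rw [show cap15 0 3 = 0 from if_neg (by decide), show cap15 1 3 = 1 from if_pos (by decide), show cap15 2 3 = 1 from if_pos (by decide), show cap15 3 3 = 0 from if_neg (by decide), show cap15 4 3 = 0 from if_neg (by decide), show cap15 5 3 = 0 from if_neg (by decide), show cap15 3 0 = 1 from if_pos (by decide), show cap15 3 1 = 0 from if_neg (by decide), show cap15 3 2 = 1 from if_pos (by decide), show cap15 3 4 = 0 from if_neg (by decide), show cap15 3 5 = 0 from if_neg (by decide)]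
    norm_num
  · rw [Fin.sum_univ_six, Fin.sum_univ_six]
    show cap15 0 4 + cap15 1 4 + cap15 2 4 + cap15 3 4 + cap15 4 4 + cap15 5 4 = cap15 4 0 + cap15 4 1 + cap15 4 2 + cap15 4 3 + cap15 4 4 + cap15 4 5
    rw [show cap15 0 4 = 1 from if_pos (by decide), show cap15 1 4 = 0 from if_neg (by decide), show cap15 2 4 = 0 from if_neg (by decide), show cap15 3 4 = 0 from if_neg (by decide), show cap15 4 4 = 0 from if_neg (by decide), show cap15 5 4 = 0 from if_neg (by decide), show cap15 4 0 = 0 from if_neg (by decide), show cap15 4 1 = 0 from if_neg (by decide), show cap15 4 2 = 1 from if_pos (by decide), show cap15 4 3 = 0 from if_neg (by decide), show cap15 4 5 = 0 from if_neg (by decide)]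
    norm_num
  · rw [Fin.sum_univ_six, Fin.sum_univ_six]
    show cap15 0 5 + cap15 1 5 + cap15 2 5 + cap15 3 5 + cap15 4 5 + cap15 5 5 = cap15 5 0 + cap15 5 1 + cap15 5 2 + cap15 5 3 + cap15 5 4 + cap15 5 5
    rw [show cap15 0 5 = 1 from if_pos (by decide), show cap15 1 5 = 0 from if_neg (by decide), show cap15 2 5 = 1 from if_pos (by decide), show cap15 3 5 = 0 from if_neg (by decide), show cap15 4 5 = 0 from if_neg (by decide), show cap15 5 5 = 0 from if_neg (by decide), show cap15 5 0 = 1 from if_pos (by decide), show cap15 5 1 = 1 from if_pos (by decide), show cap15 5 2 = 0 from if_neg (by decide), show cap15 5 3 = 0 from if_neg (by decide), show cap15 5 4 = 0 from if_neg (by decide)]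
    norm_num

lemma visits_insert (C : EdgeCycle (Fin 6)) (a : Fin 6) (S : Finset (Fin 6)) :
    C.Visits (insert a S) ↔ C.Visits {a} ∨ C.Visits S := by
  simp [EdgeCycle.Visits, Finset.mem_insert, exists_or]

lemma key_impl (C : EdgeCycle (Fin 6)) :
    (((C.Visits {1, 2} ∧ C.Visits (Finset.univ \ {1, 2})) ∨
      (C.Visits {0, 1, 2, 3} ∧ C.Visits (Finset.univ \ {0, 1, 2, 3}))) →
      ((C.Visits {0, 1, 2} ∧ C.Visits (Finset.univ \ {0, 1, 2})) ∨
       (C.Visits {1, 2, 3} ∧ C.Visits (Finset.univ \ {1, 2, 3})))) ∧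
    (((C.Visits {1, 2} ∧ C.Visits (Finset.univ \ {1, 2})) ∧
      (C.Visits {0, 1, 2, 3} ∧ C.Visits (Finset.univ \ {0, 1, 2, 3}))) →
      ((C.Visits {0, 1, 2} ∧ C.Visits (Finset.univ \ {0, 1, 2})) ∧
       (C.Visits {1, 2, 3} ∧ C.Visits (Finset.univ \ {1, 2, 3})))) := by
  rw [show (Finset.univ \ {1, 2} : Finset (Fin 6)) = {0, 3, 4, 5} from by decide,
    show (Finset.univ \ {0, 1, 2, 3} : Finset (Fin 6)) = {4, 5} from by decide,
    show (Finset.univ \ {0, 1, 2} : Finset (Fin 6)) = {3, 4, 5} from by decide,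
    show (Finset.univ \ {1, 2, 3} : Finset (Fin 6)) = {0, 4, 5} from by decide]
  simp only [visits_insert]
  tauto

set_option maxHeartbeats 1000000 in
lemma mflux_superadd (F : List (CycleFlow (Fin 6))) :
    mflux F {1, 2} (Finset.univ \ {1, 2}) +
      mflux F {0, 1, 2, 3} (Finset.univ \ {0, 1, 2, 3}) ≤
    mflux F {0, 1, 2} (Finset.univ \ {0, 1, 2}) +
      mflux F {1, 2, 3} (Finset.univ \ {1, 2, 3}) := by
  induction F with
  | nil => simp [mflux]
  | cons C F ih =>
    simp only [mflux_cons]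
    have hkey := key_impl C.cyc
    have hnn := C.flux_nonneg
    split_ifs <;> first | linarith | (exfalso; tauto)

lemma declass : (fun a b => Classical.propDecidable (a = b) : DecidableEq (Fin 6)) =
    instDecidableEqFin 6 := by
  funext a b
  exact Subsingleton.elim _ _

end Net15

open Net15

/-- This network is balanced, its entropies satisfy `S(BC) = 3, S(ABCD) = 3,
S(ABC) = 3, S(BCD) = 2`, strong subadditivity fails, and hence the network does
not satisfy the nesting property. -/
theorem stmt15 :
    BalancedNet cap15 ∧
    entropy cap15 Finset.univ ({1, 2} : Finset (Fin 6)) = 3 ∧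
    entropy cap15 Finset.univ ({0, 1, 2, 3} : Finset (Fin 6)) = 3 ∧
    entropy cap15 Finset.univ ({0, 1, 2} : Finset (Fin 6)) = 3 ∧
    entropy cap15 Finset.univ ({1, 2, 3} : Finset (Fin 6)) = 2 ∧
    entropy cap15 Finset.univ ({0, 1, 2} : Finset (Fin 6)) +
        entropy cap15 Finset.univ ({1, 2, 3} : Finset (Fin 6)) <
      entropy cap15 Finset.univ ({1, 2} : Finset (Fin 6)) +
        entropy cap15 Finset.univ ({0, 1, 2, 3} : Finset (Fin 6)) ∧
    ¬ Nesting cap15 Finset.univ := by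
  refine ⟨balanced15, ent_BC, ent_ABCD, ent_ABC, ent_BCD, ?_, ?_⟩
  · rw [ent_BC, ent_ABCD, ent_ABC, ent_BCD]
    norm_num
  · intro hN
    obtain ⟨F, hF, h1, h2⟩ := hN {1, 2} {0, 3} (Finset.subset_univ _) (Finset.subset_univ _)
      (by rw [Finset.disjoint_left]; decide)
    rw [ent_BC] at h1
    rw [show (@Union.union _ (@Finset.instUnion (Fin 6) (fun a b => Classical.propDecidable (a = b))) {1, 2} {0, 3} : Finset (Fin 6)) = {0, 1, 2, 3} from by convert (show ({1, 2} ∪ {0, 3} : Finset (Fin 6)) = {0, 1, 2, 3} from by decide)] at h2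
    rw [ent_ABCD] at h2
    have hs := mflux_superadd F
    have hA := ub_ABC F hF
    have hB := ub_BCD F hF
    rw [show mflux F {1, 2} (Finset.univ \ {1, 2}) = 3 from by convert h1,
      show mflux F {0, 1, 2, 3} (Finset.univ \ {0, 1, 2, 3}) = 3 from by convert h2] at hs
    linarith
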